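/- arXiv:1910.10818 — 4 statements merged into one kernel-verified Lean document; each statement's English description precedes it below -/
import Mathlib

section
/- Let X be a standard Borel (Polish) measurable space, κ a Markov kernel from X to X, and K, T measurable subsets of X with T ⊆ K. Fix N ∈ ℕ and define the value functions V_N(x) = 1_T(x), V_k(x) = 1_T(x) + 1_{K\T}(x) · ∫_X V_{k+1}(y) κ(dy | x) for k < N. Let P_{x_0} denote the law of the time-homogeneous Markov chain (x_0, x_1, x_2, …) with transition kernel κ started deterministically at x_0 ∈ X (the Ionescu–Tulcea trajectory measure on X^ℕ). Then for every x_0 ∈ X, V_0(x_0) = ∫ ∑_{j=0}^{N} (∏_{i=0}^{j-1} 1_{K\T}(ω_i)) · 1_T(ω_j) dP_{x_0}(ω), i.e., the backward recursion computes the first-hitting time safety probability r_{x_0}(K,T). -/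
open MeasureTheory ProbabilityTheory

/-- Prepending a point to a trajectory: `prepend a ω = (a, ω 0, ω 1, …)`. -/
def prependTraj {X : Type*} (a : X) (ω : ℕ → X) : ℕ → X :=
  fun n => if n = 0 then a else ω (n - 1)

lemma measurable_prependTraj {X : Type*} [MeasurableSpace X] (a : X) :
    Measurable (prependTraj a) := by
  apply measurable_pi_lambda
  intro n
  cases n with
  | zero => simpa [prependTraj] using measurable_const
  | succ k => simpa [prependTraj] using measurable_pi_apply k

lemma integral_bind_of_nonneg {α β : Type*} [MeasurableSpace α] [MeasurableSpace β]
    (μ : Measure α) (ν : α → Measure β) (hν : Measurable ν)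
    (hp : ∀ x, IsProbabilityMeasure (ν x))
    {f : β → ℝ} (hf : Measurable f) (h0 : ∀ b, 0 ≤ f b) {C : ℝ} (hC : ∀ b, f b ≤ C) :
    ∫ b, f b ∂(μ.bind ν) = ∫ x, ∫ b, f b ∂(ν x) ∂μ := by
  have h1 : ∀ (ρ : Measure β), ∫ b, f b ∂ρ = (∫⁻ b, ENNReal.ofReal (f b) ∂ρ).toReal :=
    fun ρ => integral_eq_lintegral_of_nonneg_ae (ae_of_all _ h0) hf.aestronglyMeasurable
  have hfm : Measurable fun b => ENNReal.ofReal (f b) := ENNReal.measurable_ofReal.comp hf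
  simp_rw [h1]
  rw [Measure.lintegral_bind hν.aemeasurable hfm.aemeasurable]
  refine (integral_toReal ?_ ?_).symm
  · exact ((Measure.measurable_lintegral hfm).comp hν).aemeasurable
  · refine ae_of_all _ fun x => ?_
    calc ∫⁻ b, ENNReal.ofReal (f b) ∂(ν x)
        ≤ ∫⁻ _, ENNReal.ofReal C ∂(ν x) :=
          lintegral_mono fun b => ENNReal.ofReal_le_ofReal (hC b)
      _ = ENNReal.ofReal C := by haveI := hp x; simp
      _ < ⊤ := ENNReal.ofReal_lt_top


/-- Let `X` be a standard Borel space, `κ` a Markov kernel from `X` to `X`, and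
`T ⊆ K` measurable sets.  Let `η x₀` be the law of the time-homogeneous Markov chain
with transition kernel `κ` started deterministically at `x₀` (the Ionescu–Tulcea
trajectory measure on `X^ℕ`), characterized by its defining Markov-chain recursion:
the trajectory from `x` is `x` prepended to the trajectory from a point `y ~ κ(·|x)`.
Then the value functions of the backward recursion `V N = 1_T`,
`V k x = 1_T x + 1_{K\T} x · ∫ V (k+1) dκ(·|x)` compute the first-hitting time safety
probability:
`V 0 x₀ = ∫ ∑_{j=0}^{N} (∏_{i=0}^{j-1} 1_{K\T}(ω i)) · 1_T(ω j) dη x₀(ω)`. -/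
theorem backward_recursion_eq_first_hitting_probability
    {X : Type*} [MeasurableSpace X] [StandardBorelSpace X] [Nonempty X]
    (κ : Kernel X X) [IsMarkovKernel κ]
    (K T : Set X) (hK : MeasurableSet K) (hT : MeasurableSet T) (hTK : T ⊆ K)
    (N : ℕ) (V : ℕ → X → ℝ)
    (hVN : ∀ x, V N x = T.indicator (fun _ => (1 : ℝ)) x)
    (hVk : ∀ k < N, ∀ x, V k x =
      T.indicator (fun _ => (1 : ℝ)) x +
        (K \ T).indicator (fun _ => (1 : ℝ)) x * ∫ y, V (k + 1) y ∂(κ x))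
    (η : Kernel X (ℕ → X)) [IsMarkovKernel η]
    (hη : ∀ x, η x = (κ x).bind fun y => (η y).map (prependTraj x)) :
    ∀ x₀ : X, V 0 x₀ =
      ∫ ω, (∑ j ∈ Finset.range (N + 1),
        (∏ i ∈ Finset.range j, (K \ T).indicator (fun _ => (1 : ℝ)) (ω i)) *
          T.indicator (fun _ => (1 : ℝ)) (ω j)) ∂(η x₀) := by

  set g : X → ℝ := (K \ T).indicator (fun _ => (1 : ℝ)) with hgdef
  set h : X → ℝ := T.indicator (fun _ => (1 : ℝ)) with hhdef
  have hg : Measurable g := measurable_const.indicator (hK.diff hT)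
  have hh : Measurable h := measurable_const.indicator hT
  have hg0 : ∀ x, 0 ≤ g x := fun x => Set.indicator_nonneg (fun _ _ => zero_le_one) x
  have hh0 : ∀ x, 0 ≤ h x := fun x => Set.indicator_nonneg (fun _ _ => zero_le_one) x
  have hg1 : ∀ x, g x ≤ 1 := fun x => by
    by_cases hx : x ∈ K \ T <;> simp [hgdef, Set.indicator_of_mem, Set.indicator_of_notMem, hx]
  have hh1 : ∀ x, h x ≤ 1 := fun x => by
    by_cases hx : x ∈ T <;> simp [hhdef, Set.indicator_of_mem, Set.indicator_of_notMem, hx]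
  -- the running-sum functional
  set F : ℕ → (ℕ → X) → ℝ := fun m ω =>
    ∑ j ∈ Finset.range (m + 1), (∏ i ∈ Finset.range j, g (ω i)) * h (ω j) with hFdef
  have hFmeas : ∀ m, Measurable (F m) := by
    intro m
    apply Finset.measurable_sum
    intro j _
    exact (Finset.measurable_prod _ fun i _ => hg.comp (measurable_pi_apply i)).mul
      (hh.comp (measurable_pi_apply j))
  have hterm01 : ∀ (j : ℕ) (ω : ℕ → X),
      0 ≤ (∏ i ∈ Finset.range j, g (ω i)) * h (ω j) ∧
        (∏ i ∈ Finset.range j, g (ω i)) * h (ω j) ≤ 1 := by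
    intro j ω
    have hp0 : 0 ≤ ∏ i ∈ Finset.range j, g (ω i) :=
      Finset.prod_nonneg fun i _ => hg0 _
    have hp1 : ∏ i ∈ Finset.range j, g (ω i) ≤ 1 :=
      Finset.prod_le_one (fun i _ => hg0 _) (fun i _ => hg1 _)
    constructor
    · exact mul_nonneg hp0 (hh0 _)
    · calc (∏ i ∈ Finset.range j, g (ω i)) * h (ω j) ≤ 1 * 1 :=
        mul_le_mul hp1 (hh1 _) (hh0 _) zero_le_one
      _ = 1 := one_mul 1
  have hF0 : ∀ m ω, 0 ≤ F m ω := fun m ω =>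
    Finset.sum_nonneg fun j _ => (hterm01 j ω).1
  have hFB : ∀ m ω, F m ω ≤ (m + 1 : ℝ) := by
    intro m ω
    calc F m ω ≤ ∑ _j ∈ Finset.range (m + 1), (1 : ℝ) :=
      Finset.sum_le_sum fun j _ => (hterm01 j ω).2
    _ = (m + 1 : ℝ) := by simp
  -- unfold one step of the trajectory measure
  have hstep : ∀ (x : X) {f : (ℕ → X) → ℝ} (hf : Measurable f) (h0 : ∀ ω, 0 ≤ f ω)
      {C : ℝ} (hC : ∀ ω, f ω ≤ C),
      ∫ ω, f ω ∂(η x) = ∫ y, ∫ ω, f (prependTraj x ω) ∂(η y) ∂(κ x) := by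
    intro x f hf h0 C hC
    rw [hη x]
    rw [integral_bind_of_nonneg (κ x) (fun y => (η y).map (prependTraj x))
      ((Measure.measurable_map _ (measurable_prependTraj x)).comp η.measurable)
      (fun y => Measure.isProbabilityMeasure_map (measurable_prependTraj x).aemeasurable)
      hf h0 hC]
    congr 1
    ext y
    exact integral_map (measurable_prependTraj x).aemeasurable hf.aestronglyMeasurable
  have key : ∀ m k, k + m = N → ∀ x, V k x = ∫ ω, F m ω ∂(η x) := by
    intro m
    induction m with
    | zero =>
      intro k hk x
      have hkN : k = N := by omega
      subst hkN
      rw [hstep x (hFmeas 0) (hF0 0) (hFB 0)]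
      have hpe : ∀ ω : ℕ → X, F 0 (prependTraj x ω) = h x := by
        intro ω
        simp [hFdef, prependTraj]
      simp_rw [hpe]
      simp [hVN x, integral_const]
    | succ m ih =>
      intro k hk x
      have hkN : k < N := by omega
      have hk1 : (k + 1) + m = N := by omega
      rw [hstep x (hFmeas (m + 1)) (hF0 (m + 1)) (hFB (m + 1))]
      have hpe : ∀ ω : ℕ → X, F (m + 1) (prependTraj x ω) = h x + g x * F m ω := by
        intro ω
        have hp0 : prependTraj x ω 0 = x := rfl
        have hps : ∀ n : ℕ, prependTraj x ω (n + 1) = ω n := fun n => rfl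
        simp only [hFdef]
        rw [Finset.sum_range_succ']
        simp only [hp0, hps, Finset.range_zero, Finset.prod_empty, one_mul]
        rw [Finset.mul_sum]
        rw [add_comm]
        congr 1
        apply Finset.sum_congr rfl
        intro j _
        rw [Finset.prod_range_succ']
        simp only [hp0, hps]
        ring
      simp_rw [hpe]
      -- inner integral
      have hinner : ∀ y : X, ∫ ω, (h x + g x * F m ω) ∂(η y) = h x + g x * V (k + 1) y := by
        intro y
        have hint : Integrable (F m) (η y) := by
          refine Integrable.mono' (integrable_const (m + 1 : ℝ))
            (hFmeas m).aestronglyMeasurable (ae_of_all _ fun ω => ?_)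
          rw [Real.norm_eq_abs, abs_of_nonneg (hF0 m ω)]
          exact hFB m ω
        rw [integral_add (integrable_const _) (hint.const_mul _), integral_const,
          integral_const_mul, ih (k + 1) hk1 y]
        simp
      simp_rw [hinner]
      -- outer integral
      have hVmeas : Measurable (V (k + 1)) := by
        have : V (k + 1) = fun y => ∫ ω, F m ω ∂(η y) := funext fun y => ih (k + 1) hk1 y
        rw [this]
        exact (StronglyMeasurable.integral_kernel_prod_right
          (f := fun (_ : X) ω => F m ω) ((hFmeas m).comp measurable_snd).stronglyMeasurable
          (κ := η)).measurable
      have hVint : Integrable (V (k + 1)) (κ x) := by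
        refine Integrable.mono' (integrable_const (m + 1 : ℝ))
          hVmeas.aestronglyMeasurable (ae_of_all _ fun y => ?_)
        rw [ih (k + 1) hk1 y, Real.norm_eq_abs]
        have h0' : 0 ≤ ∫ ω, F m ω ∂(η y) := integral_nonneg (hF0 m)
        rw [abs_of_nonneg h0']
        calc ∫ ω, F m ω ∂(η y) ≤ ∫ _, (m + 1 : ℝ) ∂(η y) := by
              refine integral_mono ?_ (integrable_const _) (hFB m)
              refine Integrable.mono' (integrable_const (m + 1 : ℝ))
                (hFmeas m).aestronglyMeasurable (ae_of_all _ fun ω => ?_)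
              rw [Real.norm_eq_abs, abs_of_nonneg (hF0 m ω)]
              exact hFB m ω
          _ = (m + 1 : ℝ) := by simp
      rw [integral_add (integrable_const _) (hVint.const_mul _), integral_const,
        integral_const_mul]
      simp [hVk k hkN x]
  intro x₀
  exact key N 0 (by omega) x₀
end

section
/- Let X be a measurable space, κ a Markov kernel from X to X, K, T measurable subsets of X with T ⊆ K, and N ∈ ℕ. Let V_N, …, V_0 be defined by the exact backward recursion V_N = 1_T, V_k(x) = 1_T(x) + 1_{K\T}(x) ∫_X V_{k+1} dκ(·|x). Suppose W_N, …, W_0 : X → ℝ are bounded measurable functions with W_N = 1_T such that for every k < N and every x ∈ X, |W_k(x) − (1_T(x) + 1_{K\T}(x) ∫_X W_{k+1}(y) κ(dy|x))| ≤ ε for some ε ≥ 0 (a per-step approximation error of at most ε). Then for every k ∈ {0, …, N} and every x ∈ X, |W_k(x) − V_k(x)| ≤ (N − k)·ε; in particular the approximate safety probability satisfies |W_0(x) − V_0(x)| ≤ N·ε. -/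
open MeasureTheory ProbabilityTheory

/-- Let `κ` be a Markov kernel from `X` to `X` and `T ⊆ K` measurable sets.  Let
`V N, …, V 0` be the exact backward recursion `V N = 1_T`,
`V k x = 1_T x + 1_{K\T} x · ∫ V (k+1) dκ(·|x)`, and let `W N, …, W 0` be bounded
measurable functions with `W N = 1_T` incurring a per-step approximation error of at
most `ε ≥ 0`:
`|W k x − (1_T x + 1_{K\T} x · ∫ W (k+1) dκ(·|x))| ≤ ε` for all `k < N` and `x`.
Then `|W k x − V k x| ≤ (N − k)·ε` for every `k ≤ N` and every `x`; in particular
`|W 0 x − V 0 x| ≤ N·ε`. -/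
theorem approximate_value_functions_error_bound
    {X : Type*} [MeasurableSpace X] (κ : Kernel X X) [IsMarkovKernel κ]
    (K T : Set X) (hK : MeasurableSet K) (hT : MeasurableSet T) (hTK : T ⊆ K)
    (N : ℕ) (ε : ℝ) (hε : 0 ≤ ε) (V W : ℕ → X → ℝ)
    (hVN : ∀ x, V N x = T.indicator (fun _ => (1 : ℝ)) x)
    (hVk : ∀ k < N, ∀ x, V k x =
      T.indicator (fun _ => (1 : ℝ)) x +
        (K \ T).indicator (fun _ => (1 : ℝ)) x * ∫ y, V (k + 1) y ∂(κ x))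
    (hWmeas : ∀ k ≤ N, Measurable (W k))
    (hWbdd : ∀ k ≤ N, ∃ C : ℝ, ∀ x, |W k x| ≤ C)
    (hWN : ∀ x, W N x = T.indicator (fun _ => (1 : ℝ)) x)
    (hWk : ∀ k < N, ∀ x,
      |W k x - (T.indicator (fun _ => (1 : ℝ)) x +
        (K \ T).indicator (fun _ => (1 : ℝ)) x * ∫ y, W (k + 1) y ∂(κ x))| ≤ ε) :
    (∀ k ≤ N, ∀ x, |W k x - V k x| ≤ ((N : ℝ) - (k : ℝ)) * ε) ∧
      (∀ x, |W 0 x - V 0 x| ≤ (N : ℝ) * ε) := by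
  -- Main induction (downward, on m = N - k): measurability, boundedness, error bound for V.
  have main : ∀ m : ℕ, ∀ k : ℕ, k + m = N →
      Measurable (V k) ∧ (∀ x, |V k x| ≤ 1) ∧
        (∀ x, |W k x - V k x| ≤ ((N : ℝ) - (k : ℝ)) * ε) := by
    intro m
    induction m with
    | zero =>
      intro k hk
      simp only [Nat.add_zero] at hk
      subst hk
      refine ⟨?_, ?_, ?_⟩
      · have : V k = T.indicator (fun _ => (1 : ℝ)) := funext hVN
        rw [this]
        exact (measurable_const.indicator hT)
      · intro x
        rw [hVN x]
        by_cases hx : x ∈ T <;> simp [Set.indicator_apply, hx]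
      · intro x
        rw [hVN x, ← hWN x]
        simp
    | succ m ih =>
      intro k hk
      have hkN : k < N := by omega
      have hk1 : (k + 1) + m = N := by omega
      obtain ⟨ihMeas, ihBdd, ihErr⟩ := ih (k + 1) hk1
      have hk1N : k + 1 ≤ N := by omega
      -- Integrability facts
      have hVint : ∀ x, Integrable (V (k + 1)) (κ x) := fun x =>
        (integrable_const (1 : ℝ)).mono' ihMeas.aestronglyMeasurable
          (Filter.Eventually.of_forall fun y => by
            simpa [Real.norm_eq_abs] using ihBdd y)
      obtain ⟨C, hC⟩ := hWbdd (k + 1) hk1N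
      have hWint : ∀ x, Integrable (W (k + 1)) (κ x) := fun x =>
        (integrable_const C).mono' (hWmeas (k + 1) hk1N).aestronglyMeasurable
          (Filter.Eventually.of_forall fun y => by
            simpa [Real.norm_eq_abs] using hC y)
      -- Measurability of V k
      have hVmeas : Measurable (V k) := by
        have hInt : Measurable fun x => ∫ y, V (k + 1) y ∂(κ x) := by
          have := MeasureTheory.StronglyMeasurable.integral_kernel_prod_right
            (κ := κ) (f := fun _ y => V (k + 1) y)
            (ihMeas.comp measurable_snd).stronglyMeasurable
          exact this.measurable
        have : V k = fun x => T.indicator (fun _ => (1 : ℝ)) x +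
            (K \ T).indicator (fun _ => (1 : ℝ)) x * ∫ y, V (k + 1) y ∂(κ x) :=
          funext (hVk k hkN)
        rw [this]
        exact (measurable_const.indicator hT).add
          ((measurable_const.indicator (hK.diff hT)).mul hInt)
      refine ⟨hVmeas, ?_, ?_⟩
      · -- boundedness of V k
        intro x
        rw [hVk k hkN x]
        have hIb : |∫ y, V (k + 1) y ∂(κ x)| ≤ 1 := by
          calc |∫ y, V (k + 1) y ∂(κ x)| ≤ ∫ y, |V (k + 1) y| ∂(κ x) := by
                simpa [Real.norm_eq_abs] using
                  norm_integral_le_integral_norm (μ := κ x) (V (k + 1))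
            _ ≤ ∫ _, (1 : ℝ) ∂(κ x) := integral_mono (hVint x).abs
                (integrable_const 1) ihBdd
            _ = 1 := by simp
        by_cases hxT : x ∈ T
        · have hxKT : x ∉ K \ T := fun h => h.2 hxT
          simp [Set.indicator_apply, hxT, hxKT]
        · by_cases hxK : x ∈ K \ T
          · simpa [Set.indicator_apply, hxT, hxK] using hIb
          · simp [Set.indicator_apply, hxT, hxK]
      · -- error bound
        intro x
        have step := hWk k hkN x
        set a := T.indicator (fun _ => (1 : ℝ)) x
        set b := (K \ T).indicator (fun _ => (1 : ℝ)) x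
        have hb : b = 0 ∨ b = 1 := by
          by_cases hx : x ∈ K \ T <;> simp [b, Set.indicator_apply, hx]
        have hdiff : |(∫ y, W (k + 1) y ∂(κ x)) - ∫ y, V (k + 1) y ∂(κ x)|
            ≤ ((N : ℝ) - (k + 1 : ℕ)) * ε := by
          rw [← integral_sub (hWint x) (hVint x)]
          calc |∫ y, (W (k + 1) y - V (k + 1) y) ∂(κ x)|
              ≤ ∫ y, |W (k + 1) y - V (k + 1) y| ∂(κ x) := by
                simpa [Real.norm_eq_abs] using norm_integral_le_integral_norm
                  (μ := κ x) (fun y => W (k + 1) y - V (k + 1) y)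
            _ ≤ ∫ _, ((N : ℝ) - (k + 1 : ℕ)) * ε ∂(κ x) := integral_mono
                ((hWint x).sub (hVint x)).abs (integrable_const _) ihErr
            _ = ((N : ℝ) - (k + 1 : ℕ)) * ε := by simp
        have hbd : |b * (∫ y, W (k + 1) y ∂(κ x)) - b * ∫ y, V (k + 1) y ∂(κ x)|
            ≤ ((N : ℝ) - (k + 1 : ℕ)) * ε := by
          rcases hb with hb | hb
          · rw [hb]; simp
            have hle : (k : ℝ) + 1 ≤ (N : ℝ) := by exact_mod_cast hkN
            apply mul_nonneg _ hε
            push_cast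
            linarith
          · rw [hb]; simpa using hdiff
        calc |W k x - V k x|
            = |(W k x - (a + b * ∫ y, W (k + 1) y ∂(κ x))) +
                ((b * ∫ y, W (k + 1) y ∂(κ x)) - b * ∫ y, V (k + 1) y ∂(κ x))| := by
              rw [hVk k hkN x]; simp only [a, b]; ring_nf
          _ ≤ |W k x - (a + b * ∫ y, W (k + 1) y ∂(κ x))| +
                |(b * ∫ y, W (k + 1) y ∂(κ x)) - b * ∫ y, V (k + 1) y ∂(κ x)| :=
              abs_add_le _ _
          _ ≤ ε + ((N : ℝ) - (k + 1 : ℕ)) * ε := add_le_add step hbd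
          _ = ((N : ℝ) - (k : ℝ)) * ε := by push_cast; ring
  have h1 : ∀ k ≤ N, ∀ x, |W k x - V k x| ≤ ((N : ℝ) - (k : ℝ)) * ε := by
    intro k hk x
    exact ((main (N - k) k (by omega)).2.2) x
  refine ⟨h1, fun x => ?_⟩
  simpa using h1 0 (Nat.zero_le N) x
end

section
/- Let Λ be a probability measure on ℝⁿ, let μ be the uniform probability measure on [0, 2π], and fix x, x' ∈ ℝⁿ. Then the random feature product is an unbiased estimator of the kernel: ∫_{ℝⁿ} ∫_0^{2π} (√2 cos(⟨ω, x⟩ + b)) · (√2 cos(⟨ω, x'⟩ + b)) dμ(b) dΛ(ω) = ∫_{ℝⁿ} cos(⟨ω, x − x'⟩) dΛ(ω). -/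
open MeasureTheory
open scoped RealInnerProductSpace Real

lemma rff_inner_integral (a a' : ℝ) :
    (∫ b, (Real.sqrt 2 * Real.cos (a + b)) * (Real.sqrt 2 * Real.cos (a' + b))
        ∂((ENNReal.ofReal (2 * π))⁻¹ • volume.restrict (Set.Icc (0 : ℝ) (2 * π))))
      = Real.cos (a - a') := by
  have hpi : (0:ℝ) < 2 * π := by positivity
  have key : ∀ b : ℝ, (Real.sqrt 2 * Real.cos (a + b)) * (Real.sqrt 2 * Real.cos (a' + b))
      = Real.cos (a - a') + Real.cos (a + a' + 2 * b) := by
    intro b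
    have h2 : Real.sqrt 2 * Real.sqrt 2 = 2 := Real.mul_self_sqrt (by norm_num)
    simp only [Real.cos_add, Real.cos_sub, Real.sin_add, Real.cos_two_mul, Real.sin_two_mul]
    linear_combination ((Real.cos a * Real.cos b - Real.sin a * Real.sin b) *
        (Real.cos a' * Real.cos b - Real.sin a' * Real.sin b)) * h2
      + 2 * Real.sin a * Real.sin a' * (Real.sin_sq_add_cos_sq b)
  rw [integral_smul_measure]
  simp_rw [key]
  rw [ENNReal.toReal_inv, ENNReal.toReal_ofReal hpi.le]
  have hIcc : ∫ b in Set.Icc (0:ℝ) (2*π), (Real.cos (a - a') + Real.cos (a + a' + 2 * b))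
      = ∫ b in (0:ℝ)..(2*π), (Real.cos (a - a') + Real.cos (a + a' + 2 * b)) := by
    rw [intervalIntegral.integral_of_le hpi.le, integral_Icc_eq_integral_Ioc]
  rw [hIcc]
  have hint : ∫ b in (0:ℝ)..(2*π), Real.cos (a + a' + 2 * b) = 0 := by
    have := intervalIntegral.integral_comp_mul_add Real.cos (two_ne_zero) (a + a') (a := 0) (b := 2*π)
    simp_rw [add_comm (2 * _) (a + a')] at this
    rw [this]
    rw [integral_cos]
    have : a + a' + 2 * (2*π) = (a + a' + 2*π) + 2*π := by ring
    rw [this, Real.sin_add_two_pi, Real.sin_add_two_pi]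
    simp
  rw [intervalIntegral.integral_add (intervalIntegrable_const)
    (Continuous.intervalIntegrable (by continuity) _ _), hint,
    intervalIntegral.integral_const]
  simp only [smul_eq_mul, sub_zero, add_zero]
  field_simp

/-- Let `Λ` be a probability measure on `ℝⁿ`, `μ` the uniform probability measure on
`[0, 2π]`, and fix `x, x' ∈ ℝⁿ`.  Then the random Fourier feature product
`z_{ω,b}(x) z_{ω,b}(x') = 2 cos(⟪ω, x⟫ + b) cos(⟪ω, x'⟫ + b)` is an unbiased
estimator of the kernel:
`∫∫ (√2 cos(⟪ω,x⟫+b))(√2 cos(⟪ω,x'⟫+b)) dμ(b) dΛ(ω) = ∫ cos⟪ω, x−x'⟫ dΛ(ω)`. -/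
theorem random_fourier_features_unbiased
    (n : ℕ) (Λ : Measure (EuclideanSpace ℝ (Fin n))) [IsProbabilityMeasure Λ]
    (x x' : EuclideanSpace ℝ (Fin n)) :
    ∫ ω, (∫ b,
        (Real.sqrt 2 * Real.cos (⟪ω, x⟫ + b)) * (Real.sqrt 2 * Real.cos (⟪ω, x'⟫ + b))
          ∂((ENNReal.ofReal (2 * π))⁻¹ • volume.restrict (Set.Icc (0 : ℝ) (2 * π)))) ∂Λ =
      ∫ ω, Real.cos ⟪ω, x - x'⟫ ∂Λ := by
  refine integral_congr_ae (Filter.Eventually.of_forall fun ω => ?_)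
  simp only []
  rw [rff_inner_integral, inner_sub_right]
end

section
/- Let Λ be a probability measure on ℝⁿ, μ the uniform probability measure on [0, 2π], and fix x, x' ∈ ℝⁿ. Let (ω_1, b_1), …, (ω_D, b_D) be i.i.d. with common law Λ ⊗ μ, and define the empirical kernel estimate k̂_D(x, x') = (1/D) ∑_{i=1}^{D} 2 cos(⟨ω_i, x⟩ + b_i) cos(⟨ω_i, x'⟩ + b_i), and let k(x, x') = ∫ cos(⟨ω, x − x'⟩) dΛ(ω). Then for every ε > 0, P(|k̂_D(x, x') − k(x, x')| ≥ ε) ≤ 2 exp(−D ε² / 8). -/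
open MeasureTheory ProbabilityTheory
open scoped RealInnerProductSpace Real ENNReal

section RFFAuxSection
open Real

namespace RFFAux


lemma phi_pos (p : ℝ) (hp0 : 0 ≤ p) (hp1 : p ≤ 1) (h : ℝ) :
    0 < 1 - p + p * exp h := by
  rcases hp1.lt_or_eq with h1 | h1
  · have : 0 ≤ p * exp h := mul_nonneg hp0 (exp_pos h).le
    linarith
  · subst h1
    simpa using exp_pos h

noncomputable def G (p : ℝ) : ℝ → ℝ :=
  fun h => h / 4 + p - p * exp h / (1 - p + p * exp h)

lemma hasDerivAt_g (p : ℝ) (hp0 : 0 ≤ p) (hp1 : p ≤ 1) (h : ℝ) :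
    HasDerivAt (fun h => h ^ 2 / 8 + p * h - log (1 - p + p * exp h)) (G p h) h := by
  have dφ : HasDerivAt (fun x => 1 - p + p * exp x) (p * exp h) h :=
    ((Real.hasDerivAt_exp h).const_mul p).const_add (1 - p)
  have dlog : HasDerivAt (fun x => log (1 - p + p * exp x))
      (p * exp h / (1 - p + p * exp h)) h := dφ.log (phi_pos p hp0 hp1 h).ne'
  have d1 : HasDerivAt (fun x : ℝ => x ^ 2 / 8 + p * x) (h / 4 + p) h := by
    have := ((hasDerivAt_pow 2 h).div_const 8).add ((hasDerivAt_id h).const_mul p)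
    refine this.congr_deriv ?_
    simp
    ring
  exact (d1.sub dlog)

lemma hasDerivAt_G (p : ℝ) (hp0 : 0 ≤ p) (hp1 : p ≤ 1) (h : ℝ) :
    HasDerivAt (G p)
      (1 / 4 - p * (1 - p) * exp h / (1 - p + p * exp h) ^ 2) h := by
  have hφ := phi_pos p hp0 hp1 h
  have dφ : HasDerivAt (fun x => 1 - p + p * exp x) (p * exp h) h :=
    ((Real.hasDerivAt_exp h).const_mul p).const_add (1 - p)
  have dnum : HasDerivAt (fun x => p * exp x) (p * exp h) h :=
    (Real.hasDerivAt_exp h).const_mul p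
  have d1 : HasDerivAt (fun x : ℝ => x / 4 + p) (1 / 4) h := by
    simpa using ((hasDerivAt_id h).div_const 4).add_const p
  have := d1.sub (dnum.div dφ hφ.ne')
  refine this.congr_deriv ?_
  field_simp [hφ.ne']
  ring

lemma G_deriv_nonneg (p : ℝ) (hp0 : 0 ≤ p) (hp1 : p ≤ 1) (h : ℝ) :
    0 ≤ 1 / 4 - p * (1 - p) * exp h / (1 - p + p * exp h) ^ 2 := by
  have hφ := phi_pos p hp0 hp1 h
  have hφ2 : (0:ℝ) < (1 - p + p * exp h) ^ 2 := pow_pos hφ 2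
  rw [sub_nonneg, div_le_iff₀ hφ2]
  nlinarith [sq_nonneg ((1 - p) - p * exp h), exp_pos h]

lemma G_mono (p : ℝ) (hp0 : 0 ≤ p) (hp1 : p ≤ 1) : Monotone (G p) :=
  monotone_of_hasDerivAt_nonneg (fun h => hasDerivAt_G p hp0 hp1 h)
    (fun h => G_deriv_nonneg p hp0 hp1 h)

lemma G_zero (p : ℝ) : G p 0 = 0 := by
  have : (1:ℝ) - p + p * exp 0 = 1 := by rw [exp_zero]; ring
  simp [G, this, exp_zero]

lemma g_nonneg (p : ℝ) (hp0 : 0 ≤ p) (hp1 : p ≤ 1) (h : ℝ) :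
    0 ≤ h ^ 2 / 8 + p * h - log (1 - p + p * exp h) := by
  set g : ℝ → ℝ := fun h => h ^ 2 / 8 + p * h - log (1 - p + p * exp h) with hg
  have hd : ∀ x, HasDerivAt g (G p x) x := fun x => hasDerivAt_g p hp0 hp1 x
  have hdiff : Differentiable ℝ g := fun x => (hd x).differentiableAt
  have hderiv : ∀ x, deriv g x = G p x := fun x => (hd x).deriv
  have hg0 : g 0 = 0 := by
    have h1 : (1:ℝ) - p + p * exp 0 = 1 := by rw [exp_zero]; ring
    simp [hg, h1]
  rcases le_total 0 h with hh | hh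
  · have hmono : MonotoneOn g (Set.Ici 0) := by
      apply monotoneOn_of_deriv_nonneg (convex_Ici 0) hdiff.continuous.continuousOn
        hdiff.differentiableOn
      intro x hx
      rw [hderiv]
      rw [interior_Ici] at hx
      have : G p 0 ≤ G p x := G_mono p hp0 hp1 (le_of_lt hx)
      rw [G_zero] at this
      exact this
    have := hmono (Set.self_mem_Ici) (Set.mem_Ici.2 hh) hh
    rw [hg0] at this
    exact this
  · have hanti : AntitoneOn g (Set.Iic 0) := by
      apply antitoneOn_of_deriv_nonpos (convex_Iic 0) hdiff.continuous.continuousOn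
        hdiff.differentiableOn
      intro x hx
      rw [hderiv]
      rw [interior_Iic] at hx
      have : G p x ≤ G p 0 := G_mono p hp0 hp1 (le_of_lt hx)
      rw [G_zero] at this
      exact this
    have := hanti (Set.mem_Iic.2 hh) (Set.self_mem_Iic) hh
    rw [hg0] at this
    exact this

lemma hoeffding_core (p : ℝ) (hp0 : 0 ≤ p) (hp1 : p ≤ 1) (h : ℝ) :
    (1 - p) * exp (-(p * h)) + p * exp ((1 - p) * h) ≤ exp (h ^ 2 / 8) := by
  have hφ := phi_pos p hp0 hp1 h
  have key := g_nonneg p hp0 hp1 h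
  calc (1 - p) * exp (-(p * h)) + p * exp ((1 - p) * h)
      = exp (-(p * h)) * (1 - p + p * exp h) := by
        rw [show (1 - p) * h = h + -(p * h) by ring, Real.exp_add]; ring
    _ = exp (-(p * h) + log (1 - p + p * exp h)) := by rw [Real.exp_add, exp_log hφ]
    _ ≤ exp (h ^ 2 / 8) := exp_le_exp.mpr (by linarith)



lemma mgf_le_of_mem_Icc {Ω : Type*} [MeasurableSpace Ω] {μ : Measure Ω}
    [IsProbabilityMeasure μ] {Y : Ω → ℝ} (hY : Measurable Y) {a b : ℝ}
    (hab : ∀ ω, Y ω ∈ Set.Icc a b) (hmean : ∫ ω, Y ω ∂μ = 0) (t : ℝ) :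
    mgf Y μ t ≤ exp (t ^ 2 * (b - a) ^ 2 / 8) := by
  have hYint : Integrable Y μ := by
    refine (integrable_const (|a| + |b|)).mono' hY.aestronglyMeasurable (ae_of_all _ fun ω => ?_)
    have h1 := (hab ω).1; have h2 := (hab ω).2
    rw [Real.norm_eq_abs, abs_le]
    constructor
    · nlinarith [neg_abs_le a, abs_nonneg b]
    · nlinarith [le_abs_self b, abs_nonneg a]
  have ha : a ≤ 0 := by
    have : ∫ _ω, a ∂μ ≤ ∫ ω, Y ω ∂μ :=
      integral_mono (integrable_const a) hYint fun ω => (hab ω).1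
    simpa [hmean] using this
  have hb : 0 ≤ b := by
    have : ∫ ω, Y ω ∂μ ≤ ∫ _ω, b ∂μ :=
      integral_mono hYint (integrable_const b) fun ω => (hab ω).2
    simpa [hmean] using this
  have hexp_int : Integrable (fun ω => exp (t * Y ω)) μ := by
    refine (integrable_const (exp (|t| * (|a| + |b|)))).mono'
      ((hY.const_mul t).exp.aestronglyMeasurable) (ae_of_all _ fun ω => ?_)
    rw [Real.norm_eq_abs, abs_exp]
    apply exp_le_exp.mpr
    have h1 := (hab ω).1; have h2 := (hab ω).2
    have hYabs : |Y ω| ≤ |a| + |b| := by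
      rw [abs_le]; constructor
      · nlinarith [neg_abs_le a, abs_nonneg b]
      · nlinarith [le_abs_self b, abs_nonneg a]
    calc t * Y ω ≤ |t * Y ω| := le_abs_self _
      _ = |t| * |Y ω| := abs_mul t (Y ω)
      _ ≤ |t| * (|a| + |b|) := by
          exact mul_le_mul_of_nonneg_left hYabs (abs_nonneg t)
  rcases eq_or_lt_of_le (ha.trans hb) with heq | hlt
  · -- a = b = 0, Y ≡ 0
    have ha0 : a = 0 := le_antisymm ha (by rw [heq]; exact hb)
    have hb0 : b = 0 := by rw [← heq, ha0]
    have hY0 : ∀ ω, Y ω = 0 := fun ω =>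
      le_antisymm (by have := (hab ω).2; rw [hb0] at this; exact this)
        (by have := (hab ω).1; rw [ha0] at this; exact this)
    have : mgf Y μ t = 1 := by
      simp [mgf, hY0, measure_univ]
    rw [this]
    exact Real.one_le_exp (by positivity)
  · -- a < b
    have hba : (0:ℝ) < b - a := by linarith
    set p : ℝ := -a / (b - a) with hp
    have hp0 : 0 ≤ p := div_nonneg (by linarith) hba.le
    have hp1 : p ≤ 1 := by rw [hp, div_le_one hba]; linarith
    have key : ∀ ω, exp (t * Y ω) ≤
        (b - Y ω) * (exp (t * a) / (b - a)) + (Y ω - a) * (exp (t * b) / (b - a)) := by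
      intro ω
      have h1 := (hab ω).1; have h2 := (hab ω).2
      have w1 : (0:ℝ) ≤ (b - Y ω) / (b - a) := div_nonneg (by linarith) hba.le
      have w2 : (0:ℝ) ≤ (Y ω - a) / (b - a) := div_nonneg (by linarith) hba.le
      have wsum : (b - Y ω) / (b - a) + (Y ω - a) / (b - a) = 1 := by
        rw [← add_div, show b - Y ω + (Y ω - a) = b - a by ring, div_self hba.ne']
      have hconv := convexOn_exp.2 (Set.mem_univ (t * a)) (Set.mem_univ (t * b)) w1 w2 wsum
      have harg : ((b - Y ω) / (b - a)) • (t * a) + ((Y ω - a) / (b - a)) • (t * b) = t * Y ω := by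
        simp only [smul_eq_mul]
        rw [div_mul_eq_mul_div, div_mul_eq_mul_div, ← add_div, div_eq_iff hba.ne']
        ring
      rw [harg] at hconv
      calc exp (t * Y ω) ≤ (b - Y ω) / (b - a) * exp (t * a) + (Y ω - a) / (b - a) * exp (t * b) :=
            hconv
        _ = (b - Y ω) * (exp (t * a) / (b - a)) + (Y ω - a) * (exp (t * b) / (b - a)) := by ring
    have hint1 : Integrable (fun ω => (b - Y ω) * (exp (t * a) / (b - a))) μ :=
      ((integrable_const b).sub hYint).mul_const _
    have hint2 : Integrable (fun ω => (Y ω - a) * (exp (t * b) / (b - a))) μ :=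
      (hYint.sub (integrable_const a)).mul_const _
    have hRHSint : Integrable (fun ω =>
        (b - Y ω) * (exp (t * a) / (b - a)) + (Y ω - a) * (exp (t * b) / (b - a))) μ :=
      hint1.add hint2
    have hint_le : mgf Y μ t ≤
        b * (exp (t * a) / (b - a)) + (-a) * (exp (t * b) / (b - a)) := by
      have := integral_mono hexp_int hRHSint key
      refine this.trans_eq ?_
      rw [integral_add hint1 hint2, integral_mul_const, integral_mul_const,
        integral_sub (integrable_const b) hYint, integral_sub hYint (integrable_const a),
        hmean]
      simp [measure_univ]
    refine hint_le.trans ?_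
    have core := hoeffding_core p hp0 hp1 (t * (b - a))
    have e1 : (1:ℝ) - p = b / (b - a) := by rw [hp]; field_simp; ring
    have e2 : -(p * (t * (b - a))) = t * a := by rw [hp]; field_simp
    have e3 : (1 - p) * (t * (b - a)) = t * b := by rw [e1]; field_simp
    have e4 : (t * (b - a)) ^ 2 / 8 = t ^ 2 * (b - a) ^ 2 / 8 := by ring
    rw [e2, e3, e4, e1] at core
    calc b * (exp (t * a) / (b - a)) + (-a) * (exp (t * b) / (b - a))
        = b / (b - a) * exp (t * a) + p * exp (t * b) := by rw [hp]; ring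
      _ ≤ exp (t ^ 2 * (b - a) ^ 2 / 8) := core



lemma hoeffding_sum {Ω : Type*} [MeasurableSpace Ω] {P : Measure Ω} [IsProbabilityMeasure P]
    {Y : ℕ → Ω → ℝ} (hYmeas : ∀ i, Measurable (Y i))
    (hYindep : iIndepFun Y P)
    {c : ℝ} (hYmem : ∀ i a, Y i a ∈ Set.Icc (-2 - c) (2 - c))
    (hYmean : ∀ i, ∫ a, Y i a ∂P = 0)
    (D : ℕ) (ε : ℝ) (hε : 0 < ε) :
    (P {a | (D : ℝ) * ε ≤ (∑ i ∈ Finset.range D, Y i) a}).toReal ≤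
        exp (-(D : ℝ) * ε ^ 2 / 8) ∧
    (P {a | (∑ i ∈ Finset.range D, Y i) a ≤ -((D : ℝ) * ε)}).toReal ≤
        exp (-(D : ℝ) * ε ^ 2 / 8) := by
  have hmgf : ∀ i t, mgf (Y i) P t ≤ exp (2 * t ^ 2) := by
    intro i t
    have := mgf_le_of_mem_Icc (hYmeas i) (hYmem i) (hYmean i) t
    have he : t ^ 2 * ((2 - c) - (-2 - c)) ^ 2 / 8 = 2 * t ^ 2 := by ring
    rwa [he] at this
  have hint : ∀ t i, Integrable (fun ω => exp (t * Y i ω)) P := by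
    intro t i
    refine (integrable_const (exp (|t| * (2 + |c|)))).mono'
      (((hYmeas i).const_mul t).exp.aestronglyMeasurable) (ae_of_all _ fun ω => ?_)
    rw [Real.norm_eq_abs, abs_exp]
    apply exp_le_exp.mpr
    have h1 := (hYmem i ω).1; have h2 := (hYmem i ω).2
    have hYabs : |Y i ω| ≤ 2 + |c| := by
      rw [abs_le]; constructor
      · have := le_abs_self c; linarith
      · have := neg_abs_le c; linarith
    calc t * Y i ω ≤ |t * Y i ω| := le_abs_self _
      _ = |t| * |Y i ω| := abs_mul _ _
      _ ≤ |t| * (2 + |c|) := mul_le_mul_of_nonneg_left hYabs (abs_nonneg t)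
  have hsum_int : ∀ t, Integrable (fun ω => exp (t * (∑ i ∈ Finset.range D, Y i) ω)) P :=
    fun t => hYindep.integrable_exp_mul_sum hYmeas (fun i _ => hint t i)
  have hmgf_sum : ∀ t, mgf (∑ i ∈ Finset.range D, Y i) P t ≤ exp (2 * (D : ℝ) * t ^ 2) := by
    intro t
    rw [hYindep.mgf_sum hYmeas]
    calc ∏ i ∈ Finset.range D, mgf (Y i) P t
        ≤ ∏ _i ∈ Finset.range D, exp (2 * t ^ 2) :=
          Finset.prod_le_prod (fun i _ => mgf_nonneg) (fun i _ => hmgf i t)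
      _ = exp (2 * t ^ 2) ^ D := by rw [Finset.prod_const, Finset.card_range]
      _ = exp (2 * (D : ℝ) * t ^ 2) := by
          rw [← Real.exp_nat_mul]; ring_nf
  constructor
  · have h1 := measure_ge_le_exp_mul_mgf (X := ∑ i ∈ Finset.range D, Y i) (μ := P)
      ((D : ℝ) * ε) (t := ε / 4) (by positivity) (hsum_int _)
    refine h1.trans ?_
    calc exp (-(ε / 4) * ((D : ℝ) * ε)) * mgf (∑ i ∈ Finset.range D, Y i) P (ε / 4)
        ≤ exp (-(ε / 4) * ((D : ℝ) * ε)) * exp (2 * (D : ℝ) * (ε / 4) ^ 2) := by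
          exact mul_le_mul_of_nonneg_left (hmgf_sum _) (exp_pos _).le
      _ = exp (-(D : ℝ) * ε ^ 2 / 8) := by rw [← Real.exp_add]; ring_nf
  · have h1 := measure_le_le_exp_mul_mgf (X := ∑ i ∈ Finset.range D, Y i) (μ := P)
      (-((D : ℝ) * ε)) (t := -(ε / 4)) (by linarith) (hsum_int _)
    refine h1.trans ?_
    calc exp (-(-(ε / 4)) * -((D : ℝ) * ε)) * mgf (∑ i ∈ Finset.range D, Y i) P (-(ε / 4))
        ≤ exp (-(-(ε / 4)) * -((D : ℝ) * ε)) * exp (2 * (D : ℝ) * (-(ε / 4)) ^ 2) := by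
          exact mul_le_mul_of_nonneg_left (hmgf_sum _) (exp_pos _).le
      _ = exp (-(D : ℝ) * ε ^ 2 / 8) := by rw [← Real.exp_add]; ring_nf


end RFFAux
end RFFAuxSection

/-- Hoeffding bound for random Fourier features.  Let `Λ` be a probability measure on
`ℝⁿ`, `μ` the uniform probability measure on `[0, 2π]`, and fix `x, x' ∈ ℝⁿ`.  Let
`(ω i, b i)` for `i = 1, …, D` be i.i.d. with common law `Λ ⊗ μ`, and let
`k̂_D(x,x') = (1/D) ∑_i 2 cos(⟪ω i, x⟫ + b i) cos(⟪ω i, x'⟫ + b i)` and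
`k(x,x') = ∫ cos⟪ω, x − x'⟫ dΛ(ω)`.  Then for every `ε > 0`,
`P(|k̂_D(x,x') − k(x,x')| ≥ ε) ≤ 2 exp(−D ε²/8)`. -/
theorem random_fourier_features_hoeffding_bound
    (n : ℕ) (Λ : Measure (EuclideanSpace ℝ (Fin n))) [IsProbabilityMeasure Λ]
    {Ω : Type*} [MeasurableSpace Ω] (P : Measure Ω) [IsProbabilityMeasure P]
    (wb : ℕ → Ω → (EuclideanSpace ℝ (Fin n)) × ℝ)
    (hmeas : ∀ i, Measurable (wb i))
    (hlaw : ∀ i, Measure.map (wb i) P =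
      Λ.prod ((ENNReal.ofReal (2 * π))⁻¹ • volume.restrict (Set.Icc (0 : ℝ) (2 * π))))
    (hindep : iIndepFun wb P)
    (x x' : EuclideanSpace ℝ (Fin n)) (D : ℕ) (ε : ℝ) (hε : 0 < ε) :
    P {a | ε ≤ |(1 / (D : ℝ)) * ∑ i ∈ Finset.range D,
          2 * Real.cos (⟪(wb i a).1, x⟫ + (wb i a).2) *
            Real.cos (⟪(wb i a).1, x'⟫ + (wb i a).2) -
        ∫ ω, Real.cos ⟪ω, x - x'⟫ ∂Λ|} ≤
      ENNReal.ofReal (2 * Real.exp (-(D : ℝ) * ε ^ 2 / 8)) := by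
  rcases Nat.eq_zero_or_pos D with hD0 | hDpos
  · subst hD0
    refine (prob_le_one).trans ?_
    simp only [Nat.cast_zero, neg_zero, zero_mul, zero_div, Real.exp_zero, mul_one]
    exact ENNReal.one_le_ofReal.mpr (by norm_num)
  set ν : Measure ℝ := (ENNReal.ofReal (2 * π))⁻¹ • volume.restrict (Set.Icc (0 : ℝ) (2 * π))
    with hν
  have h2π : (0:ℝ) < 2 * π := by positivity
  haveI hνprob : IsProbabilityMeasure ν := by
    constructor
    rw [hν, Measure.smul_apply, Measure.restrict_apply_univ, Real.volume_Icc, smul_eq_mul]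
    rw [show (2 * π - 0 : ℝ) = 2 * π by ring]
    exact ENNReal.inv_mul_cancel (by simp [h2π, Real.pi_pos]) ENNReal.ofReal_ne_top
  set f : (EuclideanSpace ℝ (Fin n)) × ℝ → ℝ := fun q => 2 * Real.cos (⟪q.1, x⟫ + q.2) * Real.cos (⟪q.1, x'⟫ + q.2)
    with hf
  have hf_cont : Continuous f := by
    apply Continuous.mul
    · apply Continuous.mul continuous_const
      exact Real.continuous_cos.comp ((continuous_fst.inner continuous_const).add continuous_snd)
    · exact Real.continuous_cos.comp ((continuous_fst.inner continuous_const).add continuous_snd)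
  have hf_bound : ∀ q, |f q| ≤ 2 := by
    intro q
    rw [hf]
    have c1 := Real.abs_cos_le_one (⟪q.1, x⟫ + q.2)
    have c2 := Real.abs_cos_le_one (⟪q.1, x'⟫ + q.2)
    rw [abs_mul, abs_mul, abs_two]
    nlinarith [abs_nonneg (Real.cos (⟪q.1, x⟫ + q.2)), abs_nonneg (Real.cos (⟪q.1, x'⟫ + q.2))]
  set m : ℝ := ∫ ω, Real.cos ⟪ω, x - x'⟫ ∂Λ with hm
  -- the inner integral over the phase
  have Icos : ∀ c0 : ℝ, ∫ b, Real.cos (c0 + 2 * b) ∂ν = 0 := by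
    intro c0
    rw [hν, integral_smul_measure]
    have hIcc : ∫ b in Set.Icc (0:ℝ) (2 * π), Real.cos (c0 + 2 * b) = 0 := by
      rw [MeasureTheory.integral_Icc_eq_integral_Ioc,
        ← intervalIntegral.integral_of_le h2π.le,
        intervalIntegral.integral_comp_add_mul Real.cos two_ne_zero c0]
      rw [integral_cos]
      rw [show c0 + 2 * (2 * π) = (c0 + 2 * π) + 2 * π by ring, Real.sin_add_two_pi,
        Real.sin_add_two_pi]
      simp
    rw [hIcc]
    simp
  have trig : ∀ A B : ℝ, 2 * Real.cos A * Real.cos B = Real.cos (A - B) + Real.cos (A + B) := by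
    intro A B
    rw [Real.cos_sub, Real.cos_add]
    ring
  have hinner : ∀ ω : EuclideanSpace ℝ (Fin n), ∫ b, f (ω, b) ∂ν = Real.cos ⟪ω, x - x'⟫ := by
    intro ω
    have hre : ∀ b : ℝ, f (ω, b) =
        Real.cos ⟪ω, x - x'⟫ + Real.cos ((⟪ω, x⟫ + ⟪ω, x'⟫) + 2 * b) := by
      intro b
      rw [hf]
      simp only
      rw [trig]
      congr 2
      · rw [inner_sub_right]
        ring
      · ring
    have hcos_int : Integrable (fun b => Real.cos ((⟪ω, x⟫ + ⟪ω, x'⟫) + 2 * b)) ν := by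
      refine (integrable_const 1).mono'
        ((Real.continuous_cos.comp (continuous_const.add
          (continuous_const.mul continuous_id))).aestronglyMeasurable) (ae_of_all _ fun b => ?_)
      rw [Real.norm_eq_abs]
      exact Real.abs_cos_le_one _
    simp_rw [hre]
    rw [integral_add (integrable_const _) hcos_int, integral_const, Icos]
    simp [measure_univ]
  -- the mean of each summand
  have hf_prod_int : Integrable f (Λ.prod ν) := by
    refine (integrable_const 2).mono' hf_cont.aestronglyMeasurable (ae_of_all _ fun q => ?_)
    rw [Real.norm_eq_abs]; exact hf_bound q
  have hmean_i : ∀ i, ∫ a, f (wb i a) ∂P = m := by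
    intro i
    rw [← integral_map (hmeas i).aemeasurable hf_cont.aestronglyMeasurable, hlaw i,
      MeasureTheory.integral_prod f hf_prod_int]
    simp_rw [hinner]
    rfl
  -- the centered variables
  set Y : ℕ → Ω → ℝ := fun i a => f (wb i a) - m with hY
  have hYmeas : ∀ i, Measurable (Y i) :=
    fun i => (hf_cont.measurable.comp (hmeas i)).sub measurable_const
  have hYindep : iIndepFun Y P :=
    hindep.comp (fun _ q => f q - m) (fun _ => hf_cont.measurable.sub measurable_const)
  have hYmem : ∀ i a, Y i a ∈ Set.Icc (-2 - m) (2 - m) := by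
    intro i a
    have := hf_bound (wb i a)
    rw [abs_le] at this
    constructor <;> [skip; skip] <;> simp only [hY] <;> linarith [this.1, this.2]
  have hfwb_int : ∀ i, Integrable (fun a => f (wb i a)) P := by
    intro i
    refine (integrable_const 2).mono'
      ((hf_cont.measurable.comp (hmeas i)).aestronglyMeasurable) (ae_of_all _ fun a => ?_)
    rw [Real.norm_eq_abs]; exact hf_bound _
  have hYmean : ∀ i, ∫ a, Y i a ∂P = 0 := by
    intro i
    simp only [hY]
    rw [integral_sub (hfwb_int i) (integrable_const m), hmean_i i, integral_const]
    simp [measure_univ]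
  obtain ⟨hup, hlo⟩ := RFFAux.hoeffding_sum hYmeas hYindep hYmem hYmean D ε hε
  -- event inclusion
  have hDpos' : (0:ℝ) < (D : ℝ) := by exact_mod_cast hDpos
  have hsub : {a | ε ≤ |(1 / (D : ℝ)) * ∑ i ∈ Finset.range D,
          2 * Real.cos (⟪(wb i a).1, x⟫ + (wb i a).2) *
            Real.cos (⟪(wb i a).1, x'⟫ + (wb i a).2) - m|} ⊆
      {a | (D : ℝ) * ε ≤ (∑ i ∈ Finset.range D, Y i) a} ∪
      {a | (∑ i ∈ Finset.range D, Y i) a ≤ -((D : ℝ) * ε)} := by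
    intro a ha
    simp only [Set.mem_setOf_eq] at ha
    have hsum_eq : (1 / (D : ℝ)) * ∑ i ∈ Finset.range D,
        2 * Real.cos (⟪(wb i a).1, x⟫ + (wb i a).2) *
          Real.cos (⟪(wb i a).1, x'⟫ + (wb i a).2) - m =
        (1 / (D : ℝ)) * (∑ i ∈ Finset.range D, Y i) a := by
      rw [Finset.sum_apply]
      simp only [hY, hf]
      rw [Finset.sum_sub_distrib, Finset.sum_const, Finset.card_range]
      field_simp
      rw [nsmul_eq_mul]
    rw [hsum_eq] at ha
    rcases le_abs.mp ha with h | h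
    · left
      have := mul_le_mul_of_nonneg_left h hDpos'.le
      rw [show (D:ℝ) * ((1 / (D : ℝ)) * (∑ i ∈ Finset.range D, Y i) a) =
        (∑ i ∈ Finset.range D, Y i) a by field_simp] at this
      exact this
    · right
      have := mul_le_mul_of_nonneg_left h hDpos'.le
      rw [show (D:ℝ) * -((1 / (D : ℝ)) * (∑ i ∈ Finset.range D, Y i) a) =
        -(∑ i ∈ Finset.range D, Y i) a by field_simp] at this
      simp only [Set.mem_setOf_eq]
      linarith
  calc P {a | ε ≤ |(1 / (D : ℝ)) * ∑ i ∈ Finset.range D,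
          2 * Real.cos (⟪(wb i a).1, x⟫ + (wb i a).2) *
            Real.cos (⟪(wb i a).1, x'⟫ + (wb i a).2) - m|}
      ≤ P ({a | (D : ℝ) * ε ≤ (∑ i ∈ Finset.range D, Y i) a} ∪
          {a | (∑ i ∈ Finset.range D, Y i) a ≤ -((D : ℝ) * ε)}) := measure_mono hsub
    _ ≤ P {a | (D : ℝ) * ε ≤ (∑ i ∈ Finset.range D, Y i) a} +
        P {a | (∑ i ∈ Finset.range D, Y i) a ≤ -((D : ℝ) * ε)} := measure_union_le _ _
    _ ≤ ENNReal.ofReal (Real.exp (-(D : ℝ) * ε ^ 2 / 8)) +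
        ENNReal.ofReal (Real.exp (-(D : ℝ) * ε ^ 2 / 8)) := by
        gcongr
        · rw [← ENNReal.ofReal_toReal (measure_ne_top P _)]
          exact ENNReal.ofReal_le_ofReal hup
        · rw [← ENNReal.ofReal_toReal (measure_ne_top P _)]
          exact ENNReal.ofReal_le_ofReal hlo
    _ = ENNReal.ofReal (2 * Real.exp (-(D : ℝ) * ε ^ 2 / 8)) := by
        rw [← ENNReal.ofReal_add (Real.exp_pos _).le (Real.exp_pos _).le, two_mul]
end
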